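/- Let A be a commutative ring, m ≥ 1, and let φ : A → k[t]/(t^{m+1}) be a ring homomorphism (k a field) such that the induced composite map A → k[t]/(t^2) is surjective. Then φ is surjective. -/

import Mathlib

set_option synthInstance.maxHeartbeats 1000000
set_option maxHeartbeats 1000000

/-- Let `A` be a commutative ring, `m ≥ 1`, and `φ : A → k[t]/(t^(m+1))` a
ring homomorphism (`k` a field) such that the induced composite `A → k[t]/(t^2)` is
surjective.  Then `φ` is surjective. -/
theorem surjective_of_surjective_mod_sq
    (k : Type*) [Field k] (A : Type*) [CommRing A] (m : ℕ) (hm : 1 ≤ m)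
    (φ : A →+* Polynomial k ⧸ Ideal.span {(Polynomial.X : Polynomial k) ^ (m + 1)})
    (hle : Ideal.span {(Polynomial.X : Polynomial k) ^ (m + 1)} ≤
      Ideal.span {(Polynomial.X : Polynomial k) ^ 2})
    (hsurj : Function.Surjective
      ((Ideal.Quotient.factor hle).comp φ)) :
    Function.Surjective φ := by
  classical
  set t : Polynomial k ⧸ Ideal.span {(Polynomial.X : Polynomial k) ^ (m+1)} :=
    Ideal.Quotient.mk _ Polynomial.X with ht
  set M : Ideal (Polynomial k ⧸ Ideal.span {(Polynomial.X : Polynomial k) ^ (m+1)}) :=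
    Ideal.span {t} with hM
  have htM : t ∈ M := Ideal.subset_span rfl
  have hMpow : ∀ j : ℕ, M ^ j = Ideal.span {t ^ j} := fun j => Ideal.span_singleton_pow t j
  have base2 : ∀ r, ∃ a, r - φ a ∈ M ^ 2 := by
    intro r
    obtain ⟨x, rfl⟩ := Ideal.Quotient.mk_surjective r
    obtain ⟨a, ha⟩ := hsurj (Ideal.Quotient.mk (Ideal.span {(Polynomial.X : Polynomial k) ^ 2}) x)
    refine ⟨a, ?_⟩
    obtain ⟨y, hy⟩ := Ideal.Quotient.mk_surjective (Ideal.Quotient.mk _ x - φ a)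
    rw [← hy]
    have h0 : Ideal.Quotient.factor hle (Ideal.Quotient.mk _ y) = 0 := by
      rw [hy, map_sub, Ideal.Quotient.factor_mk]
      simp only [RingHom.comp_apply] at ha
      rw [ha, sub_self]
    rw [Ideal.Quotient.factor_mk] at h0
    have hy2 : y ∈ Ideal.span {(Polynomial.X : Polynomial k) ^ 2} :=
      Ideal.Quotient.eq_zero_iff_mem.mp h0
    obtain ⟨c, hc⟩ := Ideal.mem_span_singleton.mp hy2
    rw [hMpow 2]
    exact Ideal.mem_span_singleton.mpr ⟨Ideal.Quotient.mk _ c, by rw [hc]; simp [ht]⟩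
  have Q : ∀ j : ℕ, 1 ≤ j → ∃ b c, t ^ j = φ b + c ∧ c ∈ M ^ (j+1) := by
    intro j hj
    induction j with
    | zero => omega
    | succ n ih =>
      obtain ⟨a, ha⟩ := base2 t
      rcases Nat.eq_zero_or_pos n with hn | hn
      · subst hn
        exact ⟨a, t - φ a, by ring, ha⟩
      · obtain ⟨b, c, hbc, hc⟩ := ih hn
        set f := t - φ a with hf
        have hfa : φ a = t - f := by rw [hf]; ring
        have hφaM : φ a ∈ M := by
          rw [hfa]
          exact M.sub_mem htM ((Ideal.pow_le_self (by norm_num)) ha)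
        have hφbM : φ b ∈ M ^ n := by
          have hb : φ b = t ^ n - c := by rw [hbc]; ring
          rw [hb]
          exact (M ^ n).sub_mem (Ideal.pow_mem_pow htM n)
            ((Ideal.pow_le_pow_right (by omega)) hc)
        refine ⟨b * a, c * φ a + φ b * f + c * f, ?_, ?_⟩
        · rw [map_mul]
          linear_combination t * hbc - (φ b + c) * hf
        · refine Ideal.add_mem _ (Ideal.add_mem _ ?_ ?_) ?_
          · have h1 := Ideal.mul_mem_mul hc hφaM
            rw [pow_succ M (n + 1)]; exact h1
          · have h2 := Ideal.mul_mem_mul hφbM ha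
            rw [show n + 1 + 1 = n + 2 from rfl, pow_add M n 2]; exact h2
          · have h3 := Ideal.mul_mem_mul hc ha
            have h3' : c * f ∈ M ^ (n + 1 + 2) := by rw [pow_add M (n + 1) 2]; exact h3
            exact (Ideal.pow_le_pow_right (by omega)) h3'
  have P : ∀ j : ℕ, 2 ≤ j → ∀ r, ∃ a, r - φ a ∈ M ^ j := by
    intro j hj
    induction j with
    | zero => omega
    | succ n ih =>
      rcases Nat.lt_or_ge n 2 with hn | hn
      · intro r
        have hn1 : n = 1 := by omega
        subst hn1
        exact base2 r
      · intro r
        obtain ⟨a, ha⟩ := ih hn r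
        rw [hMpow n] at ha
        obtain ⟨x, hx⟩ := Ideal.mem_span_singleton.mp ha
        obtain ⟨b, h, hbh, hh⟩ := Q n (by omega)
        obtain ⟨c, hcg⟩ := base2 x
        set g := x - φ c with hg
        have hgM : g ∈ M := (Ideal.pow_le_self (by norm_num)) hcg
        have hφbM : φ b ∈ M ^ n := by
          have hb : φ b = t ^ n - h := by rw [hbh]; ring
          rw [hb]
          exact (M ^ n).sub_mem (Ideal.pow_mem_pow htM n)
            ((Ideal.pow_le_pow_right (by omega)) hh)
        refine ⟨a + b * c, ?_⟩
        have key : r - φ (a + b * c) = φ b * g + h * x := by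
          rw [map_add, map_mul]
          linear_combination hx + x * hbh - φ b * hg
        rw [key]
        refine Ideal.add_mem _ ?_ ((M ^ (n+1)).mul_mem_right x hh)
        have h4 := Ideal.mul_mem_mul hφbM hgM
        rw [pow_succ M n]; exact h4
  intro r
  obtain ⟨a, ha⟩ := P (m+1) (by omega) r
  refine ⟨a, ?_⟩
  have hz : t ^ (m+1) = 0 := by
    rw [ht, ← map_pow]
    exact Ideal.Quotient.eq_zero_iff_mem.mpr (Ideal.subset_span rfl)
  rw [hMpow, hz, Ideal.span_singleton_eq_bot.mpr rfl, Ideal.mem_bot, sub_eq_zero] at ha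
  exact ha.symm
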